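/- Let X be a compact metric space, φ : ℝ × X → X a continuous flow on X, and F : X → ℝ a continuous function with F ≥ 0; set Z = F⁻¹({0}). Let x ∈ X be such that ∫₀^∞ F(φ(t,x)) dt < ∞. Then the distance from φ(t,x) to the set Z tends to 0 as t → ∞. -/

import Mathlib

open MeasureTheory Set Filter

/-- On a compact metric space, if `F ≥ 0` is continuous with zero set `Z` and the
integral `∫₀^∞ F(φ(t,x)) dt` is finite for a continuous flow `φ`, then the distance
from `φ(t,x)` to `Z` tends to `0` as `t → ∞`. -/
theorem tendsto_infDist_zero_set_of_integrable
    {X : Type*} [MetricSpace X] [CompactSpace X]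
    (φ : ℝ × X → X) (hφ : Continuous φ)
    (hφ0 : ∀ x : X, φ (0, x) = x)
    (hφadd : ∀ (s t : ℝ) (x : X), φ (s, φ (t, x)) = φ (s + t, x))
    (F : X → ℝ) (hF : Continuous F) (hF0 : ∀ z : X, 0 ≤ F z)
    (x : X)
    (hint : IntegrableOn (fun t : ℝ => F (φ (t, x))) (Ici (0 : ℝ))) :
    Tendsto (fun t : ℝ => Metric.infDist (φ (t, x)) (F ⁻¹' {0})) atTop (nhds 0) := by
  set Z := F ⁻¹' {0} with hZdef
  set g : ℝ → ℝ := fun t => F (φ (t, x)) with hgdef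
  have hgcont : Continuous g := hF.comp (hφ.comp (continuous_id.prodMk continuous_const))
  have hgnn : ∀ t, 0 ≤ g t := fun t => hF0 _
  rw [Metric.tendsto_nhds]
  intro ε hε
  by_contra hcon
  rw [not_eventually] at hcon
  have hcon' : ∃ᶠ t in atTop, ε ≤ Metric.infDist (φ (t, x)) Z := by
    refine hcon.mono fun t ht => ?_
    rw [Real.dist_eq, sub_zero, abs_of_nonneg Metric.infDist_nonneg] at ht
    linarith [not_lt.mp ht]
  -- Step B: uniform time τ such that the flow moves points less than ε/2 in time ≤ τ
  have hopen : IsOpen {p : ℝ × X | dist (φ p) p.2 < ε / 2} :=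
    isOpen_lt (continuous_dist.comp (hφ.prodMk continuous_snd)) continuous_const
  have hsub : ({0} : Set ℝ) ×ˢ (univ : Set X) ⊆ {p : ℝ × X | dist (φ p) p.2 < ε / 2} := by
    rintro ⟨s, y⟩ ⟨hs, -⟩
    simp only [mem_singleton_iff] at hs
    simp [hs, hφ0 y, half_pos hε]
  obtain ⟨u, v, hu, _, h0u, huv, huvsub⟩ :=
    generalized_tube_lemma isCompact_singleton isCompact_univ hopen hsub
  obtain ⟨τ, hτ0, hball⟩ := Metric.isOpen_iff.mp hu 0 (h0u rfl)
  set τ' := τ / 2 with hτ'def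
  have hτ'0 : 0 < τ' := half_pos hτ0
  have hmove : ∀ s : ℝ, s ∈ Icc (0 : ℝ) τ' → ∀ y : X, dist (φ (s, y)) y < ε / 2 := by
    intro s hs y
    have hsu : s ∈ u := hball (by
      rw [Metric.mem_ball, Real.dist_eq, sub_zero, abs_of_nonneg hs.1]
      linarith [hs.2])
    exact huvsub ⟨hsu, huv (mem_univ y)⟩
  -- Step A: minimum of F on the shell S
  set S : Set X := {y : X | ε / 2 ≤ Metric.infDist y Z} with hSdef
  have hSclosed : IsClosed S :=
    isClosed_le continuous_const (Metric.continuous_infDist_pt Z)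
  have hScompact : IsCompact S := hSclosed.isCompact
  have hSne : S.Nonempty := by
    obtain ⟨t, ht⟩ := hcon'.exists
    exact ⟨φ (t, x), by simpa [hSdef] using le_trans (by linarith) ht⟩
  obtain ⟨y₀, hy₀S, hy₀min⟩ := hScompact.exists_isMinOn hSne hF.continuousOn
  set δ := F y₀ with hδdef
  have hδ0 : 0 < δ := by
    rcases (hF0 y₀).lt_or_eq with h | h
    · exact h
    · exfalso
      have hy₀Z : y₀ ∈ Z := by simp [hZdef, ← h]
      have h0 : Metric.infDist y₀ Z = 0 := Metric.infDist_zero_of_mem hy₀Z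
      have h2 : ε / 2 ≤ Metric.infDist y₀ Z := hy₀S
      rw [h0] at h2; linarith
  -- pointwise lower bound on an interval after a "far" time
  have hkey : ∀ t : ℝ, ε ≤ Metric.infDist (φ (t, x)) Z →
      ∀ s ∈ Icc t (t + τ'), δ ≤ g s := by
    intro t ht s hs
    have hst : s - t ∈ Icc (0 : ℝ) τ' := ⟨by linarith [hs.1], by linarith [hs.2]⟩
    have hdist : dist (φ (s, x)) (φ (t, x)) < ε / 2 := by
      have := hmove (s - t) hst (φ (t, x))
      rwa [hφadd (s - t) t x, sub_add_cancel] at this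
    have h1 : Metric.infDist (φ (t, x)) Z ≤
        Metric.infDist (φ (s, x)) Z + dist (φ (t, x)) (φ (s, x)) :=
      Metric.infDist_le_infDist_add_dist
    rw [dist_comm] at h1
    have hmem : φ (s, x) ∈ S := by
      rw [hSdef, mem_setOf_eq]
      linarith
    exact hy₀min hmem
  -- Step D: tail of the integral
  set I := ∫ t in Ici (0 : ℝ), g t with hIdef
  have hunion : (⋃ a : ℝ, Ico (0 : ℝ) a) = Ici (0 : ℝ) := by
    ext y
    simp only [mem_iUnion, mem_Ico, mem_Ici]
    exact ⟨fun ⟨a, h, _⟩ => h, fun h => ⟨y + 1, h, by linarith⟩⟩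
  have htend : Tendsto (fun a : ℝ => ∫ t in Ico (0 : ℝ) a, g t) atTop (nhds I) := by
    have := tendsto_setIntegral_of_monotone (μ := volume) (f := g)
      (s := fun a : ℝ => Ico (0 : ℝ) a) (fun a => measurableSet_Ico)
      (fun a b hab => Ico_subset_Ico_right hab) (by rw [hunion]; exact hint)
    rwa [hunion] at this
  have hev : ∀ᶠ a : ℝ in atTop, I - δ * τ' < ∫ t in Ico (0 : ℝ) a, g t :=
    htend.eventually (eventually_gt_nhds (by nlinarith))
  obtain ⟨t, htfar, htail, ht0⟩ :=
    (hcon'.and_eventually (hev.and (eventually_ge_atTop (0 : ℝ)))).exists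
  -- split the integral
  have hint_left : IntegrableOn g (Ico (0 : ℝ) t) :=
    hint.mono_set Ico_subset_Ici_self
  have hint_right : IntegrableOn g (Ici t) :=
    hint.mono_set (Ici_subset_Ici.mpr ht0)
  have hsplit : I = (∫ s in Ico (0 : ℝ) t, g s) + ∫ s in Ici t, g s := by
    rw [hIdef, ← Ico_union_Ici_eq_Ici ht0]
    exact setIntegral_union (Set.disjoint_left.mpr fun s hs h2 => absurd h2 (not_le.mpr hs.2)) measurableSet_Ici
      hint_left hint_right
  have htail' : (∫ s in Ici t, g s) < δ * τ' := by linarith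
  -- lower bound on the tail
  have hIcc : IntegrableOn g (Icc t (t + τ')) := hgcont.integrableOn_Icc
  have hlow : δ * τ' ≤ ∫ s in Icc t (t + τ'), g s := by
    have := setIntegral_ge_of_const_le (μ := volume) (c := δ) measurableSet_Icc
      (by simp) (hkey t htfar) hIcc
    rwa [Real.volume_real_Icc_of_le (by linarith), show t + τ' - t = τ' by ring,
      smul_eq_mul, mul_comm] at this
  have hmono : (∫ s in Icc t (t + τ'), g s) ≤ ∫ s in Ici t, g s := by
    refine setIntegral_mono_set hint_right ?_ ?_
    · exact Eventually.of_forall fun s => hgnn s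
    · exact HasSubset.Subset.eventuallyLE (fun s hs => hs.1)
  linarith
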